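/- Let A ∈ ℍ[t] be nonzero and reduced with respect to i. Then the vectorial polynomial A·i·Ā has no real polynomial factor of positive degree: whenever ψ ∈ ℝ[t] and Q ∈ ℍ[t] satisfy A·i·Ā = ψ·Q, the polynomial ψ is constant. -/

import Mathlib

open Polynomial

noncomputable section

/-- The quaternion unit `i`. -/
def qi : Quaternion ℝ := ⟨0, 1, 0, 0⟩

/-- Embedding of real polynomials into quaternion polynomials (scalar coefficients). -/
def toQ : Polynomial ℝ →+* Polynomial (Quaternion ℝ) :=
  mapRingHom (algebraMap ℝ (Quaternion ℝ))

/-- Coefficientwise quaternion conjugation of a quaternion polynomial. -/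
def pconj (p : Polynomial (Quaternion ℝ)) : Polynomial (Quaternion ℝ) :=
  p.sum fun n a => monomial n (star a)

/-- `A ∈ ℍ[t]` is *reduced with respect to `i`* if it has no real polynomial factor of
positive degree and no right factor of positive degree all of whose coefficients lie in the
subalgebra of `ℍ` generated by `1` and `i` (i.e. have vanishing `j`- and `k`-components). -/
def ReducedWrtI (A : Polynomial (Quaternion ℝ)) : Prop :=
  (∀ ψ : Polynomial ℝ, ∀ A' : Polynomial (Quaternion ℝ), A = toQ ψ * A' → ψ.natDegree = 0) ∧
  (∀ A' R : Polynomial (Quaternion ℝ), A = A' * R →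
    (∀ n, (R.coeff n).imJ = 0 ∧ (R.coeff n).imK = 0) → R.natDegree = 0)

abbrev HH := Quaternion ℝ

@[simp] lemma qi_re : qi.re = 0 := rfl
@[simp] lemma qi_imI : qi.imI = 1 := rfl
@[simp] lemma qi_imJ : qi.imJ = 0 := rfl
@[simp] lemma qi_imK : qi.imK = 0 := rfl

lemma qi_ne_zero : qi ≠ 0 := by
  intro h
  have := congrArg QuaternionAlgebra.imI h
  simp [Quaternion.imI_zero] at this

lemma toQ_eq (f : ℝ[X]) : toQ f = f.map (algebraMap ℝ HH) := rfl

lemma coeff_pconj (p : HH[X]) (n : ℕ) : (pconj p).coeff n = star (p.coeff n) := by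
  classical
  unfold pconj
  rw [Polynomial.sum, finset_sum_coeff]
  simp only [coeff_monomial]
  rw [Finset.sum_ite_eq' p.support n (fun i => star (p.coeff i))]
  by_cases h : n ∈ p.support
  · simp [h]
  · simp [h, Polynomial.notMem_support_iff.mp h]

lemma pconj_mul (p q : HH[X]) : pconj (p * q) = pconj q * pconj p := by
  refine Polynomial.ext fun n => ?_
  rw [coeff_pconj, coeff_mul, coeff_mul, star_sum]
  rw [← Finset.Nat.sum_antidiagonal_swap
    (f := fun x => (pconj q).coeff x.1 * (pconj p).coeff x.2)]
  refine Finset.sum_congr rfl fun x _ => ?_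
  simp [coeff_pconj, star_mul]

lemma pconj_add (p q : HH[X]) : pconj (p + q) = pconj p + pconj q := by
  refine Polynomial.ext fun n => ?_; simp [coeff_pconj]

lemma star_algMap (r : ℝ) : star (algebraMap ℝ HH r) = algebraMap ℝ HH r := by
  rw [Quaternion.algebraMap_def]
  exact Quaternion.star_coe r

lemma pconj_toQ (f : ℝ[X]) : pconj (toQ f) = toQ f := by
  refine Polynomial.ext fun n => ?_
  simp [coeff_pconj, toQ, coe_mapRingHom, coeff_map, star_algMap]

lemma pconj_monomial (n : ℕ) (x : HH) : pconj (monomial n x) = monomial n (star x) := by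
  refine Polynomial.ext fun m => ?_
  simp [coeff_pconj, coeff_monomial, apply_ite (star : HH → HH)]

lemma toQ_comm (f : ℝ[X]) (P : HH[X]) : toQ f * P = P * toQ f := by
  refine Polynomial.ext fun n => ?_
  rw [coeff_mul, coeff_mul,
    ← Finset.Nat.sum_antidiagonal_swap (f := fun x => P.coeff x.1 * (toQ f).coeff x.2)]
  refine Finset.sum_congr rfl fun x _ => ?_
  simp only [Prod.snd_swap, Prod.fst_swap, toQ, coe_mapRingHom, coeff_map]
  exact Algebra.commutes (f.coeff x.1) (P.coeff x.2)

lemma my_eq_zero_dvd {P T : HH[X]} (h : P ∣ T)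
    (hlt : T.natDegree < P.natDegree) : T = 0 := by
  obtain ⟨U, rfl⟩ := h
  by_contra hT
  have hP : P ≠ 0 := fun h0 => hT (by simp [h0])
  have hU : U ≠ 0 := fun h0 => hT (by simp [h0])
  rw [Polynomial.natDegree_mul hP hU] at hlt
  omega

lemma quat_comp (q : HH) (c1 c0 : ℝ)
    (h1 : q * qi + qi * star q = qi * algebraMap ℝ HH (-c1))
    (h2 : q * qi * star q = qi * algebraMap ℝ HH c0) :
    q.imJ = 0 ∧ q.imK = 0 ∧ q + star q = algebraMap ℝ HH (-c1) ∧
      star q * q = algebraMap ℝ HH c0 := by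
  rw [Quaternion.ext_iff] at h1 h2
  simp only [Quaternion.algebraMap_def, Quaternion.re_add, Quaternion.imI_add,
    Quaternion.imJ_add, Quaternion.imK_add, Quaternion.re_mul, Quaternion.imI_mul,
    Quaternion.imJ_mul, Quaternion.imK_mul, Quaternion.re_star, Quaternion.imI_star,
    Quaternion.imJ_star, Quaternion.imK_star, Quaternion.re_coe, Quaternion.imI_coe,
    Quaternion.imJ_coe, Quaternion.imK_coe, qi_re, qi_imI, qi_imJ, qi_imK] at h1 h2
  obtain ⟨e1, e2, e3, e4⟩ := h1
  obtain ⟨f1, f2, f3, f4⟩ := h2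
  have hy : q.imJ = 0 := by nlinarith
  have hz : q.imK = 0 := by nlinarith
  refine ⟨hy, hz, ?_, ?_⟩ <;> rw [Quaternion.ext_iff] <;>
    simp only [Quaternion.algebraMap_def, Quaternion.re_add, Quaternion.imI_add,
      Quaternion.imJ_add, Quaternion.imK_add, Quaternion.re_mul, Quaternion.imI_mul,
      Quaternion.imJ_mul, Quaternion.imK_mul, Quaternion.re_star, Quaternion.imI_star,
      Quaternion.imJ_star, Quaternion.imK_star, Quaternion.re_coe, Quaternion.imI_coe,
      Quaternion.imJ_coe, Quaternion.imK_coe] <;>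
    refine ⟨by nlinarith, by nlinarith, by nlinarith, by nlinarith⟩

lemma factor_expand (u v : HH) :
    (X - C u) * (X - C v) = X ^ 2 - C (u + v) * X + C (u * v) := by
  have hx : (X : HH[X]) * C v = C v * X := X_mul
  rw [mul_sub, sub_mul, sub_mul, hx, ← C_mul, C_add, add_mul, sq]
  noncomm_ring

lemma triple_expand (a b w : HH) :
    (monomial 1 a + monomial 0 b) * C w * (monomial 1 (star a) + monomial 0 (star b)) =
      monomial 2 (a * w * star a) + (monomial 1 (a * w * star b + b * w * star a) +
        monomial 0 (b * w * star b)) := by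
  rw [← monomial_zero_left]
  simp only [add_mul, mul_add, monomial_mul_monomial]
  norm_num
  abel

lemma eq_monomial_of_natDegree_le_one (R : HH[X]) (h : R.natDegree ≤ 1) :
    R = monomial 1 (R.coeff 1) + monomial 0 (R.coeff 0) := by
  refine Polynomial.ext fun n => ?_
  rcases n with _ | _ | n
  · simp
  · simp
  · rw [coeff_eq_zero_of_natDegree_lt (by omega)]
    simp [coeff_monomial]

lemma mono_coeff2 (s2 s1 s0 : HH) :
    ((monomial 2) s2 + ((monomial 1) s1 + (monomial 0) s0)).coeff 2 = s2 := by
  simp [coeff_monomial]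

lemma mono_coeff1 (s2 s1 s0 : HH) :
    ((monomial 2) s2 + ((monomial 1) s1 + (monomial 0) s0)).coeff 1 = s1 := by
  simp [coeff_monomial]

lemma mono_coeff0 (s2 s1 s0 : HH) :
    ((monomial 2) s2 + ((monomial 1) s1 + (monomial 0) s0)).coeff 0 = s0 := by
  simp [coeff_monomial]

lemma mono_coeff_ge (s2 s1 s0 : HH) (m : ℕ) :
    ((monomial 2) s2 + ((monomial 1) s1 + (monomial 0) s0)).coeff (m + 3) = 0 := by
  simp [coeff_monomial]

lemma monic_two_eq (π : ℝ[X]) (hm : π.Monic) (hd : π.natDegree = 2) :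
    π = X ^ 2 + C (π.coeff 1) * X + C (π.coeff 0) := by
  ext n
  rcases n with _ | _ | _ | n
  · simp
  · simp [coeff_X_pow]
  · simpa [coeff_X_pow, coeff_C] using (by rw [← hd]; exact hm.coeff_natDegree)
  · simp only [coeff_add, coeff_X_pow, coeff_C]
    rw [coeff_eq_zero_of_natDegree_lt (by omega), if_neg (by omega)]
    norm_num

set_option maxHeartbeats 3000000 in
/-- If `A ∈ ℍ[t]` is nonzero and reduced with respect to `i`, then the
vectorial polynomial `A·i·Ā` has no real polynomial factor of positive degree. -/
theorem no_real_factor_of_reduced (A : Polynomial (Quaternion ℝ)) (hA : A ≠ 0)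
    (hred : ReducedWrtI A) (ψ : Polynomial ℝ) (Q : Polynomial (Quaternion ℝ))
    (h : A * Polynomial.C qi * pconj A = toQ ψ * Q) : ψ.natDegree = 0 := by
  by_contra hψn
  have hψ0 : ψ ≠ 0 := fun h0 => hψn (by simp [h0])
  have hψu : ¬ IsUnit ψ := fun hu => hψn (natDegree_eq_zero_of_isUnit hu)
  obtain ⟨f, hf_irr, hf_dvd⟩ := WfDvdMonoid.exists_irreducible_factor hψu hψ0
  have hf0 : f ≠ 0 := hf_irr.ne_zero
  have hlc : IsUnit (C f.leadingCoeff⁻¹ : ℝ[X]) :=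
    isUnit_C.2 (IsUnit.mk0 _ (inv_ne_zero (leadingCoeff_ne_zero.2 hf0)))
  have hπm : (f * C f.leadingCoeff⁻¹).Monic := monic_mul_leadingCoeff_inv hf0
  set π : ℝ[X] := f * C f.leadingCoeff⁻¹ with hπdef
  have hassoc : Associated f π := ⟨hlc.unit, by rw [hπdef, hlc.unit_spec]⟩
  have hπ_irr : Irreducible π := hassoc.irreducible hf_irr
  have hπ_dvd : π ∣ ψ := hassoc.symm.dvd.trans hf_dvd
  clear_value π
  have hπd_le : π.natDegree ≤ 2 := natDegree_le_iff_degree_le.2 hπ_irr.degree_le_two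
  have hπd_pos : 0 < π.natDegree :=
    natDegree_pos_iff_degree_pos.2 (degree_pos_of_irreducible hπ_irr)
  have hPm : (toQ π).Monic := hπm.map _
  have hPdeg : (toQ π).natDegree = π.natDegree := by
    rw [toQ_eq]; exact hπm.natDegree_map _
  have hP1 : toQ π ≠ 1 := by
    intro h1
    rw [h1, natDegree_one] at hPdeg
    omega
  have hdvd : toQ π ∣ A * C qi * pconj A := by
    obtain ⟨g, hg⟩ := hπ_dvd
    exact ⟨toQ g * Q, by rw [h, hg, map_mul, mul_assoc]⟩
  set B := A /ₘ toQ π with hB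
  set R := A %ₘ toQ π with hRdef
  have hA2 : A = toQ π * B + R := by
    rw [add_comm]; exact (modByMonic_add_div A (toQ π)).symm
  have hRdeg : R.natDegree < (toQ π).natDegree := natDegree_modByMonic_lt A hPm hP1
  have hpA : pconj A = pconj R + pconj B * toQ π := by
    rw [hA2, pconj_add, pconj_mul, pconj_toQ, add_comm]
  have hSdvd : toQ π ∣ R * C qi * pconj R := by
    obtain ⟨W, hW⟩ := hdvd
    refine ⟨W - B * C qi * pconj R - B * C qi * (pconj B * toQ π) - R * C qi * pconj B, ?_⟩
    have e1 : A * C qi * pconj A =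
        toQ π * (B * C qi * pconj R) + toQ π * (B * C qi * (pconj B * toQ π)) +
          (R * C qi * pconj B) * toQ π + R * C qi * pconj R := by
      conv_lhs => rw [hpA, hA2]
      noncomm_ring
    rw [mul_sub, mul_sub, mul_sub, ← hW, e1, ← toQ_comm π (R * C qi * pconj B)]
    abel
  clear_value B R
  have hRd1 : R.natDegree ≤ 1 := by omega
  have hR : R = monomial 1 (R.coeff 1) + monomial 0 (R.coeff 0) :=
    eq_monomial_of_natDegree_le_one R hRd1
  set a := R.coeff 1 with ha_def
  set b := R.coeff 0 with hb_def
  clear_value a b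
  have hpR : pconj R = monomial 1 (star a) + monomial 0 (star b) := by
    rw [hR, pconj_add, pconj_monomial, pconj_monomial]
  have hSval : R * C qi * pconj R =
      monomial 2 (a * qi * star a) + (monomial 1 (a * qi * star b + b * qi * star a) +
        monomial 0 (b * qi * star b)) := by
    conv_lhs => rw [hpR]; rw [hR]
    exact triple_expand a b qi
  have hPc : ∀ k, (toQ π).coeff k = algebraMap ℝ HH (π.coeff k) := fun k => by
    rw [toQ_eq, coeff_map]
  -- the two possible degrees of π
  have hdeg12 : π.natDegree = 1 ∨ π.natDegree = 2 := by omega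
  -- a helper closing the proof when R = 0
  have hR0case : R = 0 → False := by
    intro h0
    have : A = toQ π * B := by rw [hA2, h0, add_zero]
    have := hred.1 π B this
    omega
  rcases hdeg12 with hd | hd
  · -- degree one case
    have ha0 : a = 0 := by
      rw [ha_def]
      exact coeff_eq_zero_of_natDegree_lt (by omega)
    have hS0 : R * C qi * pconj R = 0 := by
      refine my_eq_zero_dvd hSdvd ?_
      rw [hSval, ha0]
      simp only [zero_mul, mul_zero, star_zero, monomial_zero_right, zero_add, add_zero]
      calc ((monomial 0) (b * qi * star b)).natDegree ≤ 0 := natDegree_monomial_le _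
        _ < (toQ π).natDegree := by omega
    rw [hSval, ha0] at hS0
    simp only [zero_mul, mul_zero, star_zero, monomial_zero_right, zero_add, add_zero] at hS0
    have hb0 : b * qi * star b = 0 := by
      have := congrArg (fun p => Polynomial.coeff p 0) hS0
      simpa using this
    have hb : b = 0 := by
      rcases mul_eq_zero.1 hb0 with h' | h'
      · rcases mul_eq_zero.1 h' with h'' | h''
        · exact h''
        · exact absurd h'' qi_ne_zero
      · simpa using h'
    exact hR0case (by rw [hR, ha0, hb]; simp)
  · -- degree two case
    have hPd2 : (toQ π).natDegree = 2 := by omega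
    have hTdvd : toQ π ∣ R * C qi * pconj R - C (a * qi * star a) * toQ π :=
      dvd_sub hSdvd ⟨C (a * qi * star a), (toQ_comm π _).symm⟩
    have hπc2 : π.coeff 2 = 1 := by rw [← hd]; exact hπm.coeff_natDegree
    have hT0 : R * C qi * pconj R - C (a * qi * star a) * toQ π = 0 := by
      refine my_eq_zero_dvd hTdvd (lt_of_le_of_lt ?_ (by omega : 1 < (toQ π).natDegree))
      refine natDegree_le_iff_coeff_eq_zero.2 fun m hm => ?_
      rcases m with _ | _ | _ | m
      · omega
      · omega
      · rw [coeff_sub, hSval, mono_coeff2, coeff_C_mul, hPc 2, hπc2, map_one,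
          mul_one, sub_self]
      · rw [coeff_sub, hSval, mono_coeff_ge, coeff_C_mul, hPc (m + 3),
          coeff_eq_zero_of_natDegree_lt (p := π) (by omega), map_zero, mul_zero, sub_zero]
    have hE1 : a * qi * star b + b * qi * star a =
        a * qi * star a * algebraMap ℝ HH (π.coeff 1) := by
      have h1 : (R * C qi * pconj R).coeff 1 -
          (C (a * qi * star a) * toQ π).coeff 1 = 0 := by
        rw [← coeff_sub, hT0, coeff_zero]
      rw [hSval, mono_coeff1, coeff_C_mul, hPc 1] at h1
      exact sub_eq_zero.1 h1
    have hE0 : b * qi * star b = a * qi * star a * algebraMap ℝ HH (π.coeff 0) := by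
      have h1 : (R * C qi * pconj R).coeff 0 -
          (C (a * qi * star a) * toQ π).coeff 0 = 0 := by
        rw [← coeff_sub, hT0, coeff_zero]
      rw [hSval, mono_coeff0, coeff_C_mul, hPc 0] at h1
      exact sub_eq_zero.1 h1
    by_cases ha : a = 0
    · have hb0 : b * qi * star b = 0 := by rw [hE0, ha]; simp
      have hb : b = 0 := by
        rcases mul_eq_zero.1 hb0 with h' | h'
        · rcases mul_eq_zero.1 h' with h'' | h''
          · exact h''
          · exact absurd h'' qi_ne_zero
        · simpa using h'
      exact hR0case (by rw [hR, ha, hb]; simp)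
    · have hsa : star a ≠ 0 := star_ne_zero.2 ha
      set q : HH := -(a⁻¹ * b) with hq_def
      have hb : b = -(a * q) := by
        rw [hq_def, mul_neg, neg_neg, ← mul_assoc, mul_inv_cancel₀ ha, one_mul]
      clear_value q
      have hE1' : q * qi + qi * star q = qi * algebraMap ℝ HH (-(π.coeff 1)) := by
        have key : a * (-(qi * star q + q * qi)) * star a =
            a * (qi * algebraMap ℝ HH (π.coeff 1)) * star a := by
          calc a * (-(qi * star q + q * qi)) * star a
              = a * qi * star b + b * qi * star a := by
                rw [hb, star_neg, star_mul]
                noncomm_ring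
            _ = a * qi * star a * algebraMap ℝ HH (π.coeff 1) := hE1
            _ = a * (qi * algebraMap ℝ HH (π.coeff 1)) * star a := by
                rw [mul_assoc (a * qi) (star a) (algebraMap ℝ HH (π.coeff 1)),
                  ← Algebra.commutes (π.coeff 1) (star a)]
                noncomm_ring
        have key2 : -(qi * star q + q * qi) = qi * algebraMap ℝ HH (π.coeff 1) :=
          mul_left_cancel₀ ha (mul_right_cancel₀ hsa key)
        rw [map_neg, mul_neg, ← key2, neg_neg]
        exact add_comm (q * qi) (qi * star q)
      have hE2' : q * qi * star q = qi * algebraMap ℝ HH (π.coeff 0) := by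
        have key : a * (q * qi * star q) * star a =
            a * (qi * algebraMap ℝ HH (π.coeff 0)) * star a := by
          calc a * (q * qi * star q) * star a
              = b * qi * star b := by
                rw [hb, star_neg, star_mul]
                noncomm_ring
            _ = a * qi * star a * algebraMap ℝ HH (π.coeff 0) := hE0
            _ = a * (qi * algebraMap ℝ HH (π.coeff 0)) * star a := by
                rw [mul_assoc (a * qi) (star a) (algebraMap ℝ HH (π.coeff 0)),
                  ← Algebra.commutes (π.coeff 0) (star a)]
                noncomm_ring
        exact mul_left_cancel₀ ha (mul_right_cancel₀ hsa key)
      obtain ⟨hy, hz, hsum, hprod⟩ := quat_comp q _ _ hE1' hE2'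
      have hπ_eq2 : toQ π = X ^ 2 + C (algebraMap ℝ HH (π.coeff 1)) * X +
          C (algebraMap ℝ HH (π.coeff 0)) := by
        rw [toQ_eq]
        conv_lhs => rw [monic_two_eq π hπm hd]
        simp [Polynomial.map_add, Polynomial.map_pow, Polynomial.map_mul]
      have hfactP : toQ π = (X - C (star q)) * (X - C q) := by
        rw [factor_expand, add_comm (star q) q, hsum, hprod, map_neg, C_neg, neg_mul,
          sub_neg_eq_add, hπ_eq2]
      have hfactA : A = (B * (X - C (star q)) + C a) * (X - C q) := by
        have e : (B * (X - C (star q)) + C a) * (X - C q) =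
            B * ((X - C (star q)) * (X - C q)) + C a * (X - C q) := by noncomm_ring
        rw [e, ← hfactP, ← toQ_comm π B, hA2]
        congr 1
        rw [hR, hb, mul_sub, ← C_mul, C_mul_X_eq_monomial, ← monomial_zero_left]
        simp [sub_eq_add_neg, monomial_neg]
      have hco : ∀ n, (((X - C q : HH[X])).coeff n).imJ = 0 ∧
          (((X - C q : HH[X])).coeff n).imK = 0 := by
        intro n
        rcases n with _ | _ | n <;>
          constructor <;>
          simp [coeff_X, coeff_C, hy, hz, Quaternion.imJ_one, Quaternion.imK_one,
            Quaternion.imJ_zero, Quaternion.imK_zero]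
      have hfin := hred.2 _ _ hfactA hco
      rw [natDegree_X_sub_C (R := HH) q] at hfin
      omega
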